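/- Let n ∈ ℕ, L, Δ > 0, set λ = 2L + Δ and δ = 2Δ/(2L + Δ). Let t₁ ∈ ℝ, T ∈ (t₁, ∞], and let X̃ : [t₁, T) → ℝⁿ be differentiable with X̃(t₁) = 0 and ‖X̃′(t)‖ ≤ L‖X̃(t)‖ + Δ for all t ∈ [t₁, T). Then for all t ∈ [t₁, T), ‖X̃(t)‖ ≤ √( δ ( e^{λ(t−t₁)} − 1 ) ). -/
import Mathlib


/-- Exponential-instability envelope (eq. (22)) for the open-loop prediction
error during loss of feedback: with `λ = 2L + Δ`, `δ = 2Δ/(2L + Δ)`,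
`X̃(t₁) = 0` and `‖X̃̇‖ ≤ L‖X̃‖ + Δ`, one has
`‖X̃(t)‖ ≤ √(δ(e^{λ(t−t₁)} − 1))` on `[t₁, T)`. -/
theorem stmt_12 (n : ℕ) (L Δ : ℝ) (hL : 0 < L) (hΔ : 0 < Δ)
    (t₁ : ℝ) (T : EReal) (hT : (t₁ : EReal) < T)
    (X X' : ℝ → EuclideanSpace ℝ (Fin n))
    (hinit : X t₁ = 0)
    (hderiv : ∀ t : ℝ, t₁ ≤ t → (t : EReal) < T → HasDerivAt X (X' t) t)
    (hbound : ∀ t : ℝ, t₁ ≤ t → (t : EReal) < T → ‖X' t‖ ≤ L * ‖X t‖ + Δ) :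
    ∀ t : ℝ, t₁ ≤ t → (t : EReal) < T →
      ‖X t‖ ≤ Real.sqrt ((2 * Δ / (2 * L + Δ)) *
        (Real.exp ((2 * L + Δ) * (t - t₁)) - 1)) := by
  intro t ht₁ htT
  set lam : ℝ := 2 * L + Δ with hlam
  have hlam0 : 0 < lam := by positivity
  -- the squared-norm function
  set g : ℝ → ℝ := fun s => @inner ℝ _ _ (X s) (X s) with hg
  set g' : ℝ → ℝ := fun s => 2 * @inner ℝ _ _ (X s) (X' s) with hg'
  have hgnorm : ∀ s, g s = ‖X s‖ ^ 2 := fun s =>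
    real_inner_self_eq_norm_sq (X s)
  have hgderiv : ∀ s ∈ Set.Ico t₁ t, HasDerivWithinAt g (g' s) (Set.Ici s) s := by
    intro s hs
    have hsT : (s : EReal) < T := lt_of_le_of_lt (by exact_mod_cast le_of_lt hs.2) htT
    have hX := hderiv s hs.1 hsT
    have h0 : HasDerivAt g (@inner ℝ _ _ (X s) (X' s) + @inner ℝ _ _ (X' s) (X s)) s :=
      hX.inner ℝ hX
    have h2 : HasDerivAt g (g' s) s := by
      convert h0 using 1
      simp only [hg']
      linear_combination -real_inner_comm (X s) (X' s)
    exact h2.hasDerivWithinAt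
  have hgcont : ContinuousOn g (Set.Icc t₁ t) := by
    intro s hs
    rcases eq_or_lt_of_le hs.2 with rfl | hst
    · have := (hderiv s hs.1 htT).continuousAt
      exact ((this.inner this).continuousWithinAt)
    · have hsT : (s : EReal) < T := lt_of_le_of_lt (by exact_mod_cast le_of_lt hst) htT
      have := (hderiv s hs.1 hsT).continuousAt
      exact ((this.inner this).continuousWithinAt)
  have hgbound : ∀ s ∈ Set.Ico t₁ t, ‖g' s‖ ≤ lam * ‖g s‖ + Δ := by
    intro s hs
    have hsT : (s : EReal) < T := lt_of_le_of_lt (by exact_mod_cast le_of_lt hs.2) htT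
    have hXb := hbound s hs.1 hsT
    have hCS : |@inner ℝ _ _ (X s) (X' s)| ≤ ‖X s‖ * ‖X' s‖ := abs_real_inner_le_norm _ _
    have h1 : ‖g' s‖ ≤ 2 * (‖X s‖ * ‖X' s‖) := by
      rw [hg', Real.norm_eq_abs, abs_mul, abs_two]
      nlinarith
    have h2 : ‖X s‖ * ‖X' s‖ ≤ ‖X s‖ * (L * ‖X s‖ + Δ) :=
      mul_le_mul_of_nonneg_left hXb (norm_nonneg _)
    have h3 : 2 * ‖X s‖ ≤ ‖X s‖ ^ 2 + 1 := by nlinarith [sq_nonneg (‖X s‖ - 1)]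
    have hgn : ‖g s‖ = ‖X s‖ ^ 2 := by
      rw [hgnorm s, Real.norm_eq_abs, abs_of_nonneg (by positivity)]
    rw [hgn]
    nlinarith [norm_nonneg (X s)]
  have hga : ‖g t₁‖ ≤ (0 : ℝ) := by
    simp [hg, hinit]
  have key := norm_le_gronwallBound_of_norm_deriv_right_le hgcont hgderiv hga hgbound
    t ⟨ht₁, le_refl t⟩
  rw [gronwallBound_of_K_ne_0 (ne_of_gt hlam0)] at key
  simp only [zero_mul, zero_add] at key
  have hexp : 0 ≤ Real.exp (lam * (t - t₁)) - 1 := by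
    have : (1 : ℝ) ≤ Real.exp (lam * (t - t₁)) := by
      exact Real.one_le_exp (mul_nonneg hlam0.le (by linarith))
    linarith
  have hgt : g t ≤ 2 * Δ / lam * (Real.exp (lam * (t - t₁)) - 1) := by
    calc g t ≤ ‖g t‖ := le_abs_self _
      _ ≤ Δ / lam * (Real.exp (lam * (t - t₁)) - 1) := key
      _ ≤ 2 * Δ / lam * (Real.exp (lam * (t - t₁)) - 1) := by
          apply mul_le_mul_of_nonneg_right _ hexp
          gcongr
          linarith
  have hrhs : 0 ≤ 2 * Δ / lam * (Real.exp (lam * (t - t₁)) - 1) :=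
    mul_nonneg (by positivity) hexp
  rw [Real.le_sqrt (norm_nonneg _) hrhs]
  rw [← hgnorm t]
  exact hgt
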